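/- Under the contextual bandit setup with additive reward-model error Δ(x,a) = r̂(x,a) − r*(x,a) and propensity ratio ρ_k(x,a) = μ_k(a|x)/μ̂_k(a|x), the conditional variance of the doubly robust term V̂_k satisfies Var_k[V̂_k] = Var_{x∼D}[ E_{a∼ν(·|x)}[ r*(x,a) + (1−ρ_k(x,a))Δ(x,a) ] ] − E_{x∼D}[ ( E_{a∼ν(·|x)}[ρ_k(x,a)Δ(x,a)] )² ] + E_{(x,a)∼ν}[ (ν(a|x)/μ̂_k(a|x))·ρ_k(x,a)·Var_{r∼D(·|x,a)}[r] ] + E_{(x,a)∼ν}[ (ν(a|x)/μ̂_k(a|x))·ρ_k(x,a)·Δ(x,a)² ]. -/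
import Mathlib

open Finset

private lemma aux_split {X : Type*} [Fintype X] (D m t c e : X → ℝ) :
    (∑ x, D x * ((m x)^2 - (t x)^2 + (c x + e x))) - (∑ x, D x * m x)^2
    = ((∑ x, D x * (m x)^2) - (∑ x, D x * m x)^2) - (∑ x, D x * (t x)^2)
      + (∑ x, D x * c x) + (∑ x, D x * e x) := by
  have h : (∑ x, D x * ((m x)^2 - (t x)^2 + (c x + e x)))
      = ∑ x, (D x * (m x)^2 - D x * (t x)^2 + (D x * c x + D x * e x)) :=
    Finset.sum_congr rfl fun x _ => by ring
  rw [h, Finset.sum_add_distrib, Finset.sum_sub_distrib, Finset.sum_add_distrib]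
  ring



/-- Exact decomposition of the conditional variance of the doubly robust term `V̂_k`. -/
theorem stmt2 {X A R : Type*} [Fintype X] [Fintype A] [Fintype R]
    (D : X → ℝ) (nu : X → A → ℝ) (mu : X → A → ℝ)
    (Dr : X → A → R → ℝ) (rval : R → ℝ)
    (rhat : X → A → ℝ) (muhat : X → A → ℝ)
    (hD0 : ∀ x, 0 ≤ D x) (hD1 : ∑ x, D x = 1)
    (hnu0 : ∀ x a, 0 ≤ nu x a) (hnu1 : ∀ x, ∑ a, nu x a = 1)
    (hmu0 : ∀ x a, 0 ≤ mu x a) (hmu1 : ∀ x, ∑ a, mu x a = 1)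
    (hDr0 : ∀ x a r, 0 ≤ Dr x a r) (hDr1 : ∀ x a, ∑ r, Dr x a r = 1)
    (hrval0 : ∀ r, 0 ≤ rval r) (hrval1 : ∀ r, rval r ≤ 1)
    (hrhat0 : ∀ x a, 0 ≤ rhat x a) (hrhat1 : ∀ x a, rhat x a ≤ 1)
    (hmuhat : ∀ x a, 0 < muhat x a)
    (hpos : ∀ x a, 0 < nu x a → 0 < mu x a)
    (rstar : X → A → ℝ) (hrstar : ∀ x a, rstar x a = ∑ r, Dr x a r * rval r)
    (Δ : X → A → ℝ) (hΔ : ∀ x a, Δ x a = rhat x a - rstar x a)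
    (ρ : X → A → ℝ) (hρ : ∀ x a, ρ x a = mu x a / muhat x a)
    (varr : X → A → ℝ)
    (hvarr : ∀ x a, varr x a = (∑ r, Dr x a r * (rval r)^2) - (rstar x a)^2)
    (Vhat : X → A → R → ℝ)
    (hVhat : ∀ x a r, Vhat x a r =
      (∑ a', nu x a' * rhat x a') + (nu x a / muhat x a) * (rval r - rhat x a)) :
    (∑ x, ∑ a, ∑ r, D x * (mu x a * (Dr x a r * (Vhat x a r)^2)))
      - (∑ x, ∑ a, ∑ r, D x * (mu x a * (Dr x a r * Vhat x a r)))^2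
    = ((∑ x, D x * (∑ a, nu x a * (rstar x a + (1 - ρ x a) * Δ x a))^2)
        - (∑ x, D x * (∑ a, nu x a * (rstar x a + (1 - ρ x a) * Δ x a)))^2)
      - (∑ x, D x * (∑ a, nu x a * (ρ x a * Δ x a))^2)
      + (∑ x, ∑ a, D x * (nu x a * ((nu x a / muhat x a) * (ρ x a * varr x a))))
      + (∑ x, ∑ a, D x * (nu x a * ((nu x a / muhat x a) * (ρ x a * (Δ x a)^2)))) := by
  have hr1 : ∀ x a, ∑ r, Dr x a r * Vhat x a r
      = (∑ a', nu x a' * rhat x a') - (nu x a / muhat x a) * Δ x a := by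
    intro x a
    have e : ∀ r : R, Dr x a r * Vhat x a r
        = ((∑ a', nu x a' * rhat x a') - (nu x a / muhat x a) * rhat x a) * Dr x a r
          + (nu x a / muhat x a) * (Dr x a r * rval r) := by
      intro r; rw [hVhat]; ring
    rw [Finset.sum_congr rfl fun r _ => e r, Finset.sum_add_distrib,
      ← Finset.mul_sum, ← Finset.mul_sum, hDr1, ← hrstar, hΔ]
    ring
  have hr2 : ∀ x a, ∑ r, Dr x a r * (Vhat x a r)^2
      = (∑ a', nu x a' * rhat x a')^2
        - 2 * (∑ a', nu x a' * rhat x a') * ((nu x a / muhat x a) * Δ x a)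
        + (nu x a / muhat x a)^2 * (varr x a + (Δ x a)^2) := by
    intro x a
    have e : ∀ r : R, Dr x a r * (Vhat x a r)^2
        = ((∑ a', nu x a' * rhat x a')^2
            - 2 * (∑ a', nu x a' * rhat x a') * (nu x a / muhat x a) * rhat x a
            + (nu x a / muhat x a)^2 * (rhat x a)^2) * Dr x a r
          + (2 * (∑ a', nu x a' * rhat x a') * (nu x a / muhat x a)
              - 2 * (nu x a / muhat x a)^2 * rhat x a) * (Dr x a r * rval r)
          + (nu x a / muhat x a)^2 * (Dr x a r * (rval r)^2) := by
      intro r; rw [hVhat]; ring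
    rw [Finset.sum_congr rfl fun r _ => e r, Finset.sum_add_distrib, Finset.sum_add_distrib,
      ← Finset.mul_sum, ← Finset.mul_sum, ← Finset.mul_sum, hDr1, ← hrstar, hvarr, hΔ]
    ring
  have hM : ∀ x, ∑ a, nu x a * (rstar x a + (1 - ρ x a) * Δ x a)
      = (∑ a', nu x a' * rhat x a') - ∑ a, nu x a * (ρ x a * Δ x a) := by
    intro x
    have e : ∀ a, nu x a * (rstar x a + (1 - ρ x a) * Δ x a)
        = nu x a * rhat x a - nu x a * (ρ x a * Δ x a) := by
      intro a; rw [hΔ]; ring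
    rw [Finset.sum_congr rfl fun a _ => e a, Finset.sum_sub_distrib]
  have perx2 : ∀ x, ∑ a, mu x a * ∑ r, Dr x a r * Vhat x a r
      = ∑ a, nu x a * (rstar x a + (1 - ρ x a) * Δ x a) := by
    intro x
    have e : ∀ a, mu x a * ∑ r, Dr x a r * Vhat x a r
        = (∑ a', nu x a' * rhat x a') * mu x a - nu x a * (ρ x a * Δ x a) := by
      intro a; rw [hr1, hρ]; ring
    rw [Finset.sum_congr rfl fun a _ => e a, Finset.sum_sub_distrib, ← Finset.mul_sum,
      hmu1, mul_one, hM]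
  have perx : ∀ x, ∑ a, mu x a * ∑ r, Dr x a r * (Vhat x a r)^2
      = (∑ a, nu x a * (rstar x a + (1 - ρ x a) * Δ x a))^2
        - (∑ a, nu x a * (ρ x a * Δ x a))^2
        + ((∑ a, nu x a * ((nu x a / muhat x a) * (ρ x a * varr x a)))
           + (∑ a, nu x a * ((nu x a / muhat x a) * (ρ x a * (Δ x a)^2)))) := by
    intro x
    have e : ∀ a, mu x a * ∑ r, Dr x a r * (Vhat x a r)^2
        = (∑ a', nu x a' * rhat x a')^2 * mu x a
          - 2 * (∑ a', nu x a' * rhat x a') * (nu x a * (ρ x a * Δ x a))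
          + (nu x a * ((nu x a / muhat x a) * (ρ x a * varr x a))
             + nu x a * ((nu x a / muhat x a) * (ρ x a * (Δ x a)^2))) := by
      intro a; rw [hr2, hρ]; ring
    rw [Finset.sum_congr rfl fun a _ => e a, Finset.sum_add_distrib, Finset.sum_sub_distrib,
      ← Finset.mul_sum, hmu1, mul_one, ← Finset.mul_sum, Finset.sum_add_distrib, hM]
    ring
  simp only [← Finset.mul_sum]
  have mom2 : (∑ x, D x * ∑ a, mu x a * ∑ r, Dr x a r * (Vhat x a r)^2)
      = ∑ x, D x * ((∑ a, nu x a * (rstar x a + (1 - ρ x a) * Δ x a))^2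
          - (∑ a, nu x a * (ρ x a * Δ x a))^2
          + ((∑ a, nu x a * ((nu x a / muhat x a) * (ρ x a * varr x a)))
             + (∑ a, nu x a * ((nu x a / muhat x a) * (ρ x a * (Δ x a)^2))))) :=
    Finset.sum_congr rfl fun x _ => by rw [perx x]
  have mom1 : (∑ x, D x * ∑ a, mu x a * ∑ r, Dr x a r * Vhat x a r)
      = ∑ x, D x * (∑ a, nu x a * (rstar x a + (1 - ρ x a) * Δ x a)) :=
    Finset.sum_congr rfl fun x _ => by rw [perx2 x]
  rw [mom2, mom1]
  exact aux_split D (fun x => ∑ a, nu x a * (rstar x a + (1 - ρ x a) * Δ x a))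
    (fun x => ∑ a, nu x a * (ρ x a * Δ x a))
    (fun x => ∑ a, nu x a * ((nu x a / muhat x a) * (ρ x a * varr x a)))
    (fun x => ∑ a, nu x a * ((nu x a / muhat x a) * (ρ x a * (Δ x a)^2)))
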